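/- The d-dimensional quantum states ρ = Diag(1−T, T/(d−1), …, T/(d−1)) and σ = |0⟩⟨0| (for 0 ≤ T ≤ 1, d ≥ 2) have trace norm distance ‖ρ − σ‖₁/2 = T and entropy difference S(ρ) − S(σ) = T·log₂(d−1) + H((T,1−T)). -/

import Mathlib

/-- Scalar entropy contribution `H(x) = -x log₂ x` (with `0 log₂ 0 = 0`). -/
noncomputable def Hbit (x : ℝ) : ℝ := -(x * Real.logb 2 x)

/-- For the diagonal states `ρ = Diag(1-T, T/(d-1), …, T/(d-1))` and
`σ = Diag(1, 0, …, 0)`, the trace norm distance (half the sum of absolute values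
of the eigenvalues of `ρ - σ`, i.e. of the diagonal entries) equals `T`, and the
entropy difference `S(ρ) - S(σ)` (entropies computed from the diagonal
eigenvalues) equals `T log₂(d-1) + H((T, 1-T))`. -/
theorem diagonal_pair_attains_bound (d : ℕ) (hd : 2 ≤ d)
    (T : ℝ) (hT0 : 0 ≤ T) (hT1 : T ≤ 1)
    (v w : Fin d → ℝ)
    (hv : v = fun i : Fin d => if (i : ℕ) = 0 then 1 - T else T / ((d : ℝ) - 1))
    (hw : w = fun i : Fin d => if (i : ℕ) = 0 then 1 else (0 : ℝ))
    (ρ σ : Matrix (Fin d) (Fin d) ℂ)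
    (hρ : ρ = Matrix.diagonal fun i => (v i : ℂ))
    (hσ : σ = Matrix.diagonal fun i => (w i : ℂ)) :
    (∑ i, |v i - w i|) / 2 = T ∧
    (∑ i, Hbit (v i)) - (∑ i, Hbit (w i)) =
      T * Real.logb 2 ((d : ℝ) - 1)
        + (-(T * Real.logb 2 T) - (1 - T) * Real.logb 2 (1 - T)) := by
  subst hv hw
  obtain ⟨n, rfl⟩ : ∃ n, d = n + 1 := ⟨d - 1, by omega⟩
  have hn : 1 ≤ n := by omega
  have hnR : (1:ℝ) ≤ (n:ℝ) := by exact_mod_cast hn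
  have hnpos : (0:ℝ) < (n:ℝ) := by linarith
  have hcast : ((n:ℝ) + 1) - 1 = (n:ℝ) := by ring
  constructor
  · rw [Fin.sum_univ_succ]
    simp only [Fin.val_zero, Fin.val_succ, if_pos rfl, Nat.succ_ne_zero, if_neg,
      Nat.cast_add, Nat.cast_one, hcast, sub_zero, if_true, if_false]
    rw [Finset.sum_const, Finset.card_univ, Fintype.card_fin, nsmul_eq_mul]
    rw [abs_of_nonneg (by positivity : (0:ℝ) ≤ T / n)]
    have : |1 - T - 1| = T := by rw [show (1:ℝ) - T - 1 = -T by ring, abs_neg,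
      abs_of_nonneg hT0]
    rw [this]
    field_simp
    ring
  · rw [Fin.sum_univ_succ, Fin.sum_univ_succ]
    simp only [Fin.val_zero, Fin.val_succ, if_pos rfl, Nat.succ_ne_zero, if_neg,
      Nat.cast_add, Nat.cast_one, hcast, if_true, if_false]
    rw [Finset.sum_const, Finset.sum_const, Finset.card_univ, Fintype.card_fin,
      nsmul_eq_mul, nsmul_eq_mul]
    have h1 : Hbit 1 = 0 := by simp [Hbit]
    have h0 : Hbit 0 = 0 := by simp [Hbit]
    rw [h1, h0]
    rcases eq_or_lt_of_le hT0 with h | hTpos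
    · simp [← h, Hbit]
    · have hHq : Hbit (T / n) = -(T / n * (Real.logb 2 T - Real.logb 2 n)) := by
        unfold Hbit
        rw [Real.logb_div (ne_of_gt hTpos) (ne_of_gt hnpos)]
      rw [hHq]
      unfold Hbit
      field_simp
      ring
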